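/- arXiv:1806.05854 — 2 statements merged into one kernel-verified Lean document; each statement's English description precedes it below -/
import Mathlib

section
/- Let A and B be unital C*-algebras with A commutative. Then every state on the minimal C*-tensor product A ⊗ B is separable. -/
open scoped ComplexOrder TensorProduct
open scoped ComplexStarModule



/-- A state on a unital C*-algebra, as an element of the weak-* dual. -/
def IsState {A : Type*} [CStarAlgebra A] (φ : WeakDual ℂ A) : Prop :=
  φ 1 = 1 ∧ ∀ a : A, 0 ≤ φ (star a * a)

/-- A realization of the minimal (injective) C*-tensor product of unital C*-algebras
`A` and `B` as a C*-algebra `T`. -/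
structure MinCStarTensor (A B T : Type*) [CStarAlgebra A] [CStarAlgebra B]
    [CStarAlgebra T] where
  ι : (A ⊗[ℂ] B) →ₗ[ℂ] T
  inj : Function.Injective ι
  map_mul' : ∀ (a a' : A) (b b' : B),
    ι (a ⊗ₜ[ℂ] b) * ι (a' ⊗ₜ[ℂ] b') = ι ((a * a') ⊗ₜ[ℂ] (b * b'))
  map_star' : ∀ (a : A) (b : B), star (ι (a ⊗ₜ[ℂ] b)) = ι (star a ⊗ₜ[ℂ] star b)
  map_one' : ι ((1 : A) ⊗ₜ[ℂ] (1 : B)) = 1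
  dense : DenseRange ι
  min : ∀ (C : Type*) [CStarAlgebra C] (θ : (A ⊗[ℂ] B) →ₗ[ℂ] C),
    (∀ (a a' : A) (b b' : B),
      θ (a ⊗ₜ[ℂ] b) * θ (a' ⊗ₜ[ℂ] b') = θ ((a * a') ⊗ₜ[ℂ] (b * b'))) →
    (∀ (a : A) (b : B), star (θ (a ⊗ₜ[ℂ] b)) = θ (star a ⊗ₜ[ℂ] star b)) →
    Function.Injective θ → ∀ z : A ⊗[ℂ] B, ‖ι z‖ ≤ ‖θ z‖

/-- The state space of a unital C*-algebra with the weak-* topology. -/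
def States (A : Type*) [CStarAlgebra A] : Type _ := {φ : WeakDual ℂ A // IsState φ}

noncomputable instance {A : Type*} [CStarAlgebra A] : TopologicalSpace (States A) :=
  instTopologicalSpaceSubtype


/-- The set of product states on the tensor product `T`. -/
def prodStates {A B T : Type*} [CStarAlgebra A] [CStarAlgebra B] [CStarAlgebra T]
    (τ : MinCStarTensor A B T) : Set (WeakDual ℂ T) :=
  {ω | ∃ (φ : WeakDual ℂ A) (ψ : WeakDual ℂ B), IsState φ ∧ IsState ψ ∧
    ∀ (a : A) (b : B), ω (τ.ι (a ⊗ₜ[ℂ] b)) = φ a * ψ b}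

/-- A separable state: an element of the weak-* closed convex hull of product states. -/
def IsSepState {A B T : Type*} [CStarAlgebra A] [CStarAlgebra B] [CStarAlgebra T]
    (τ : MinCStarTensor A B T) (ω : WeakDual ℂ T) : Prop :=
  ω ∈ closure (convexHull ℝ (prodStates τ))

section PosLin
variable {T : Type*} [CStarAlgebra T] [PartialOrder T] [StarOrderedRing T]

lemma posLin_nonneg (φ : T →ₗ[ℂ] ℂ) (hpos : ∀ a : T, 0 ≤ φ (star a * a))
    {y : T} (hy : 0 ≤ y) : 0 ≤ φ y := by
  have h1 : star (CFC.sqrt y) * CFC.sqrt y = y := by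
    rw [(IsSelfAdjoint.of_nonneg (CFC.sqrt_nonneg y)).star_eq, CFC.sqrt_mul_sqrt_self y hy]
  simpa [h1] using hpos (CFC.sqrt y)

lemma posLin_one_real (φ : T →ₗ[ℂ] ℂ) (hpos : ∀ a : T, 0 ≤ φ (star a * a)) :
    φ 1 = ((φ 1).re : ℂ) := by
  have h : 0 ≤ φ 1 := by simpa using hpos 1
  rw [Complex.le_def] at h
  exact (Complex.re_add_im (φ 1)) ▸ by simp [← h.2]

lemma posLin_selfAdjoint_bound (φ : T →ₗ[ℂ] ℂ) (hpos : ∀ a : T, 0 ≤ φ (star a * a))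
    {h : T} (hh : IsSelfAdjoint h) :
    φ h = ((φ h).re : ℂ) ∧ |(φ h).re| ≤ ‖h‖ * (φ 1).re := by
  have e : ∀ r : ℝ, φ (algebraMap ℝ T r) = r * φ 1 := by
    intro r
    rw [Algebra.algebraMap_eq_smul_one, ← algebraMap_smul ℂ r (1 : T), map_smul]
    simp [Algebra.smul_def]
  have h1 : 0 ≤ φ (algebraMap ℝ T ‖h‖ - h) :=
    posLin_nonneg φ hpos (by simpa [sub_nonneg] using hh.le_algebraMap_norm_self)
  have h2 : 0 ≤ φ (algebraMap ℝ T ‖h‖ + h) :=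
    posLin_nonneg φ hpos (by simpa [← sub_nonneg, sub_neg_eq_add, add_comm] using hh.neg_algebraMap_norm_le_self)
  rw [map_sub, e, Complex.le_def] at h1
  rw [map_add, e, Complex.le_def] at h2
  have hone := posLin_one_real φ hpos
  have him : (φ h).im = 0 := by
    have := h1.2
    simp only [Complex.zero_im, Complex.sub_im, Complex.mul_im] at this
    have h1im : (φ 1).im = 0 := by rw [hone]; simp
    simp only [h1im, mul_zero, Complex.ofReal_im] at this ⊢
    linarith [this]
  constructor
  · exact (Complex.re_add_im (φ h)) ▸ by simp [him]
  · have r1 : (φ h).re ≤ ‖h‖ * (φ 1).re := by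
      have := h1.1
      simp only [Complex.zero_re, Complex.sub_re, Complex.mul_re, Complex.ofReal_re,
        Complex.ofReal_im] at this
      have h1im : (φ 1).im = 0 := by rw [hone]; simp
      rw [h1im] at this; nlinarith
    have r2 : -(‖h‖ * (φ 1).re) ≤ (φ h).re := by
      have := h2.1
      simp only [Complex.zero_re, Complex.add_re, Complex.mul_re, Complex.ofReal_re,
        Complex.ofReal_im] at this
      have h1im : (φ 1).im = 0 := by rw [hone]; simp
      rw [h1im] at this; nlinarith
    rw [abs_le]; exact ⟨r2, r1⟩

lemma posLin_bound (φ : T →ₗ[ℂ] ℂ) (hpos : ∀ a : T, 0 ≤ φ (star a * a)) (x : T) :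
    ‖φ x‖ ≤ 2 * (φ 1).re * ‖x‖ := by
  have hre : ‖(ℜ x : T)‖ ≤ ‖x‖ := by
    rw [realPart_apply_coe, norm_smul]
    have : ‖x + star x‖ ≤ ‖x‖ + ‖star x‖ := norm_add_le _ _
    rw [norm_star] at this
    simp only [norm_inv, Real.norm_ofNat]
    linarith
  have him : ‖(ℑ x : T)‖ ≤ ‖x‖ := by
    rw [imaginaryPart_apply_coe, norm_smul, norm_smul]
    have : ‖x - star x‖ ≤ ‖x‖ + ‖star x‖ := norm_sub_le _ _
    rw [norm_star] at this
    simp only [norm_neg, Complex.norm_I, norm_inv, Real.norm_ofNat, one_mul]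
    linarith
  have hdecomp : x = (ℜ x : T) + Complex.I • (ℑ x : T) := (realPart_add_I_smul_imaginaryPart x).symm
  obtain ⟨e1, b1⟩ := posLin_selfAdjoint_bound φ hpos (ℜ x).2
  obtain ⟨e2, b2⟩ := posLin_selfAdjoint_bound φ hpos (ℑ x).2
  calc ‖φ x‖ = ‖φ (ℜ x : T) + Complex.I * φ (ℑ x : T)‖ := by
        conv_lhs => rw [hdecomp]
        rw [map_add, map_smul]; simp [smul_eq_mul]
    _ ≤ ‖φ (ℜ x : T)‖ + ‖Complex.I * φ (ℑ x : T)‖ := norm_add_le _ _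
    _ = |(φ (ℜ x : T)).re| + |(φ (ℑ x : T)).re| := by
        rw [e1, e2]; simp [Complex.norm_real]
    _ ≤ ‖(ℜ x : T)‖ * (φ 1).re + ‖(ℑ x : T)‖ * (φ 1).re := add_le_add b1 b2
    _ ≤ ‖x‖ * (φ 1).re + ‖x‖ * (φ 1).re := by
        have h0 : 0 ≤ (φ 1).re := by
          have : 0 ≤ φ 1 := by simpa using hpos 1
          exact (Complex.le_def.mp this).1
        gcongr
    _ = 2 * (φ 1).re * ‖x‖ := by ring
end PosLin

section States
variable {T : Type*} [CStarAlgebra T]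

/-- view a weak-* functional as a plain linear map -/
def WeakDual.toLin (ω : WeakDual ℂ T) : T →ₗ[ℂ] ℂ :=
  (show T →L[ℂ] ℂ from ω).toLinearMap

@[simp] lemma WeakDual.toLin_apply (ω : WeakDual ℂ T) (x : T) : ω.toLin x = ω x := rfl

lemma isClosed_states : IsClosed {φ : WeakDual ℂ T | IsState φ} := by
  have h1 : IsClosed {φ : WeakDual ℂ T | φ 1 = 1} :=
    isClosed_eq (WeakDual.eval_continuous (1 : T)) continuous_const
  have h2 : ∀ a : T, IsClosed {φ : WeakDual ℂ T | 0 ≤ φ (star a * a)} := by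
    intro a
    have : IsClosed {z : ℂ | 0 ≤ z} := by
      have : {z : ℂ | 0 ≤ z} = Complex.re ⁻¹' Set.Ici 0 ∩ Complex.im ⁻¹' {0} := by
        ext z; simp [Complex.le_def, eq_comm]
      rw [this]
      exact (isClosed_Ici.preimage Complex.continuous_re).inter
        (isClosed_singleton.preimage Complex.continuous_im)
    exact this.preimage (WeakDual.eval_continuous (star a * a))
  have : {φ : WeakDual ℂ T | IsState φ}
      = {φ : WeakDual ℂ T | φ 1 = 1} ∩ ⋂ a : T, {φ : WeakDual ℂ T | 0 ≤ φ (star a * a)} := by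
    ext φ; simp [IsState, Set.mem_iInter]
  rw [this]
  exact h1.inter (isClosed_iInter h2)

lemma convex_states : Convex ℝ {φ : WeakDual ℂ T | IsState φ} := by
  rintro φ hφ ψ hψ a b ha hb hab
  constructor
  · show (a • φ + b • ψ) 1 = 1
    have : (a • φ + b • ψ) 1 = a • φ 1 + b • ψ 1 := rfl
    rw [this, hφ.1, hψ.1]
    simp [Complex.real_smul]
    exact_mod_cast congrArg (Complex.ofReal) hab
  · intro x
    show (0:ℂ) ≤ a • φ (star x * x) + b • ψ (star x * x)
    have h1 := hφ.2 x
    have h2 := hψ.2 x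
    rw [Complex.real_smul, Complex.real_smul]
    have := add_nonneg (mul_nonneg (by exact_mod_cast ha : (0:ℂ) ≤ (a:ℂ)) h1)
      (mul_nonneg (by exact_mod_cast hb : (0:ℂ) ≤ (b:ℂ)) h2)
    exact this

lemma isCompact_states [PartialOrder T] [StarOrderedRing T] :
    IsCompact {φ : WeakDual ℂ T | IsState φ} := by
  apply WeakDual.isCompact_of_bounded_of_closed _ isClosed_states
  apply Bornology.IsBounded.subset (Metric.isBounded_closedBall (x := (0 : StrongDual ℂ T)) (r := 2))
  rintro φ hφ
  simp only [Set.mem_preimage, Metric.mem_closedBall, dist_zero_right]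
  apply ContinuousLinearMap.opNorm_le_bound _ (by norm_num)
  intro x
  have := posLin_bound (WeakDual.toLin φ) (fun a => hφ.2 a) x
  change ‖φ x‖ ≤ 2 * (φ 1).re * ‖x‖ at this
  calc ‖(WeakDual.toStrongDual φ) x‖ = ‖φ x‖ := rfl
    _ ≤ 2 * (φ 1).re * ‖x‖ := this
    _ = 2 * ‖x‖ := by
        have h1 : φ 1 = 1 := hφ.1
        rw [h1]; norm_num
end States


section OrderAux
variable {A : Type*} [CStarAlgebra A] [PartialOrder A] [StarOrderedRing A]

lemma real_smul_nonneg {r : ℝ} (hr : 0 ≤ r) {a : A} (ha : 0 ≤ a) : 0 ≤ r • a := by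
  have h1 : star ((Real.sqrt r : ℂ) • CFC.sqrt a) * ((Real.sqrt r : ℂ) • CFC.sqrt a) = r • a := by
    rw [star_smul, smul_mul_smul_comm]
    rw [(IsSelfAdjoint.of_nonneg (CFC.sqrt_nonneg a)).star_eq, CFC.sqrt_mul_sqrt_self a ha]
    have : star (Real.sqrt r : ℂ) * (Real.sqrt r : ℂ) = ((r:ℝ) : ℂ) := by
      rw [Complex.star_def, Complex.conj_ofReal, ← Complex.ofReal_mul, Real.mul_self_sqrt hr]
    rw [this, ← algebraMap_smul ℂ r a]; norm_num
  exact h1 ▸ star_mul_self_nonneg _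

lemma nonneg_le_one_of_norm_le_one {a : A} (ha : 0 ≤ a) (hn : ‖a‖ ≤ 1) : a ≤ 1 := by
  have h2 : algebraMap ℝ A ‖a‖ ≤ algebraMap ℝ A 1 := by
    have h : (0:A) ≤ algebraMap ℝ A (1 - ‖a‖) := by
      rw [Algebra.algebraMap_eq_smul_one]
      exact real_smul_nonneg (by linarith) zero_le_one
    rw [map_sub, sub_nonneg] at h
    exact h
  calc a ≤ algebraMap ℝ A ‖a‖ := (IsSelfAdjoint.of_nonneg ha).le_algebraMap_norm_self
    _ ≤ algebraMap ℝ A 1 := h2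
    _ = 1 := map_one _
end OrderAux

section Tensor
variable {A B T : Type*} [CStarAlgebra A] [CStarAlgebra B] [CStarAlgebra T]

/-- `ι (a ⊗ 1)` is central in `T` when `A` is commutative. -/
lemma MinCStarTensor.central (τ : MinCStarTensor A B T) (hcomm : ∀ a b : A, a * b = b * a)
    (a : A) (t : T) : τ.ι (a ⊗ₜ[ℂ] 1) * t = t * τ.ι (a ⊗ₜ[ℂ] 1) := by
  have key : ∀ z : A ⊗[ℂ] B, τ.ι (a ⊗ₜ[ℂ] 1) * τ.ι z = τ.ι z * τ.ι (a ⊗ₜ[ℂ] 1) := by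
    intro z
    induction z using TensorProduct.induction_on with
    | zero => simp
    | tmul a' b' => rw [τ.map_mul', τ.map_mul', hcomm, one_mul, mul_one]
    | add u v hu hv => rw [map_add, mul_add, add_mul, hu, hv]
  have hfg : (fun t : T => τ.ι (a ⊗ₜ[ℂ] 1) * t) = fun t : T => t * τ.ι (a ⊗ₜ[ℂ] 1) := by
    refine Continuous.ext_on τ.dense (continuous_mul_left _) (continuous_mul_right _) ?_
    rintro _ ⟨z, rfl⟩
    exact key z
  exact congrFun hfg t

/-- Multiply a weak-* functional by a fixed element on the left. -/
noncomputable def mulFunctional (ω : WeakDual ℂ T) (z : T) : WeakDual ℂ T :=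
  ContinuousLinearMap.comp (show T →L[ℂ] ℂ from ω) (ContinuousLinearMap.mul ℂ T z)

@[simp] lemma mulFunctional_apply (ω : WeakDual ℂ T) (z x : T) :
    mulFunctional ω z x = ω (z * x) := rfl
end Tensor

section ExtremeCore
variable {A B T : Type*} [CStarAlgebra A] [CStarAlgebra B] [CStarAlgebra T]
  [PartialOrder A] [StarOrderedRing A] [PartialOrder T] [StarOrderedRing T]

lemma complex_nonneg_eq_re {c : ℂ} (h : 0 ≤ c) : c = ((c.re : ℝ) : ℂ) := by
  rw [Complex.le_def] at h
  exact (Complex.re_add_im c) ▸ by simp [← h.2]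

lemma extreme_mul_nonneg (τ : MinCStarTensor A B T) (hcomm : ∀ a b : A, a * b = b * a)
    {ω : WeakDual ℂ T}
    (hext : ω ∈ Set.extremePoints ℝ {φ : WeakDual ℂ T | IsState φ})
    {a : A} (ha : 0 ≤ a) (ha1 : a ≤ 1) (x : T) :
    ω (τ.ι (a ⊗ₜ[ℂ] 1) * x) = ω (τ.ι (a ⊗ₜ[ℂ] 1)) * ω x := by
  obtain ⟨hωS, hωext⟩ := hext
  have hstate : IsState ω := hωS
  set z := τ.ι (a ⊗ₜ[ℂ] (1:B)) with hzdef
  have hzcen : ∀ t, z * t = t * z := τ.central hcomm a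
  -- s * s = z with s selfadjoint central
  set s := τ.ι (CFC.sqrt a ⊗ₜ[ℂ] (1:B)) with hsdef
  have hss : s * s = z := by rw [hsdef, τ.map_mul', CFC.sqrt_mul_sqrt_self a ha, one_mul]
  have hsstar : star s = s := by
    rw [hsdef, τ.map_star', (IsSelfAdjoint.of_nonneg (CFC.sqrt_nonneg a)).star_eq, star_one]
  have hscen : ∀ t, s * t = t * s := τ.central hcomm _
  -- 1 - z
  have ha1' : (0:A) ≤ 1 - a := sub_nonneg.mpr ha1
  have honez : (1:T) - z = τ.ι ((1 - a) ⊗ₜ[ℂ] (1:B)) := by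
    rw [TensorProduct.sub_tmul, map_sub, τ.map_one']
  set s' := τ.ι (CFC.sqrt (1-a) ⊗ₜ[ℂ] (1:B)) with hs'def
  have hss' : s' * s' = 1 - z := by
    rw [hs'def, τ.map_mul', CFC.sqrt_mul_sqrt_self (1-a) ha1', one_mul, honez]
  have hs'star : star s' = s' := by
    rw [hs'def, τ.map_star', (IsSelfAdjoint.of_nonneg (CFC.sqrt_nonneg (1-a))).star_eq, star_one]
  have hs'cen : ∀ t, s' * t = t * s' := τ.central hcomm _
  have honezcen : ∀ t, (1 - z) * t = t * (1 - z) := by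
    intro t; rw [sub_mul, mul_sub, one_mul, mul_one, hzcen]
  -- the two functionals
  set ω₁ : WeakDual ℂ T := mulFunctional ω z with hω₁def
  set ω₂ : WeakDual ℂ T := mulFunctional ω (1 - z) with hω₂def
  have sq_key : ∀ (w v : T), star w = w → (∀ t, w * t = t * w) →
      star (w * v) * (w * v) = (w * w) * (star v * v) := by
    intro w v hw hwc
    have hwc2 : ∀ t, t * (w * w) = (w * w) * t := by
      intro t
      rw [← mul_assoc, ← hwc t, mul_assoc, ← hwc t, mul_assoc]
    rw [star_mul, hw]
    calc star v * w * (w * v) = star v * (w * w) * v := by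
          rw [mul_assoc, ← mul_assoc w w v, ← mul_assoc]
      _ = (w * w) * (star v * v) := by
          rw [hwc2 (star v), mul_assoc]
  have hω₁pos : ∀ v : T, 0 ≤ ω₁ (star v * v) := by
    intro v
    have h := sq_key s v hsstar hscen
    rw [hss] at h
    have : ω₁ (star v * v) = ω (star (s * v) * (s * v)) := by
      rw [hω₁def, mulFunctional_apply, h]
    rw [this]
    exact hstate.2 (s * v)
  have hω₂pos : ∀ v : T, 0 ≤ ω₂ (star v * v) := by
    intro v
    have h := sq_key s' v hs'star hs'cen
    rw [hss'] at h
    have : ω₂ (star v * v) = ω (star (s' * v) * (s' * v)) := by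
      rw [hω₂def, mulFunctional_apply, h]
    rw [this]
    exact hstate.2 (s' * v)
  -- the weight
  have e1 : ω₁ 1 = ω z := by rw [hω₁def, mulFunctional_apply, mul_one]
  have e2 : ω₂ 1 = 1 - ω z := by
    rw [hω₂def, mulFunctional_apply, mul_one, map_sub, hstate.1]
  have hz0 : 0 ≤ ω z := by
    rw [← e1]; simpa using hω₁pos 1
  have hz1 : 0 ≤ 1 - ω z := by
    rw [← e2]; simpa using hω₂pos 1
  set lam := (ω z).re with hlamdef
  have hzre : ω z = ((lam : ℝ) : ℂ) := complex_nonneg_eq_re hz0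
  have hlam0 : 0 ≤ lam := by
    rw [Complex.le_def] at hz0; simpa using hz0.1
  have hlam1 : lam ≤ 1 := by
    rw [Complex.le_def] at hz1
    have := hz1.1; simp only [Complex.zero_re, Complex.sub_re, Complex.one_re] at this
    linarith
  -- useful rewriting of the goal
  have goal_eq : ω (z * x) = ω z * ω x → ω (τ.ι (a ⊗ₜ[ℂ] 1) * x) = ω (τ.ι (a ⊗ₜ[ℂ] 1)) * ω x :=
    fun h => h
  apply goal_eq
  rcases eq_or_lt_of_le hlam0 with h0 | h0
  · -- lam = 0 : the functional ω₁ vanishes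
    have hz00 : ω z = 0 := by rw [hzre, ← h0]; simp
    have hb := posLin_bound (WeakDual.toLin ω₁) (fun v => hω₁pos v) x
    simp only [WeakDual.toLin_apply] at hb
    rw [e1, hz00] at hb
    simp only [Complex.zero_re, mul_zero, zero_mul] at hb
    have : ω₁ x = 0 := norm_le_zero_iff.mp hb
    rw [hω₁def, mulFunctional_apply] at this
    rw [this, hz00, zero_mul]
  rcases eq_or_lt_of_le hlam1 with h1 | h1
  · -- lam = 1 : the functional ω₂ vanishes
    have hz11 : ω z = 1 := by rw [hzre, h1]; simp
    have hb := posLin_bound (WeakDual.toLin ω₂) (fun v => hω₂pos v) x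
    simp only [WeakDual.toLin_apply] at hb
    rw [e2, hz11] at hb
    simp only [sub_self, Complex.zero_re, mul_zero, zero_mul] at hb
    have h3 : ω₂ x = 0 := norm_le_zero_iff.mp hb
    rw [hω₂def, mulFunctional_apply, sub_mul, one_mul, map_sub, sub_eq_zero] at h3
    rw [← h3, hz11, one_mul]
  -- 0 < lam < 1
  · set φ₁ : WeakDual ℂ T := lam⁻¹ • ω₁ with hφ₁def
    set φ₂ : WeakDual ℂ T := (1 - lam)⁻¹ • ω₂ with hφ₂def
    have hsmul_apply : ∀ (r : ℝ) (φ : WeakDual ℂ T) (v : T), (r • φ) v = (r:ℂ) * φ v := by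
      intro r φ v
      have h : (r • φ) v = r • (φ v) := rfl
      rw [h, Complex.real_smul]
    have hφ₁S : IsState φ₁ := by
      constructor
      · rw [hφ₁def, hsmul_apply]
        rw [e1, hzre, ← Complex.ofReal_mul, inv_mul_cancel₀ (ne_of_gt h0)]
        simp
      · intro v
        rw [hφ₁def, hsmul_apply]
        exact mul_nonneg (by exact_mod_cast le_of_lt (inv_pos.mpr h0) : (0:ℂ) ≤ ((lam⁻¹ : ℝ) : ℂ))
          (hω₁pos v)
    have hφ₂S : IsState φ₂ := by
      constructor
      · rw [hφ₂def, hsmul_apply]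
        rw [e2, hzre]
        have : ((1:ℂ) - ((lam:ℝ):ℂ)) = (((1 - lam : ℝ)):ℂ) := by push_cast; ring
        rw [this, ← Complex.ofReal_mul, inv_mul_cancel₀ (by linarith : (1:ℝ) - lam ≠ 0)]
        simp
      · intro v
        rw [hφ₂def, hsmul_apply]
        exact mul_nonneg
          (by exact_mod_cast le_of_lt (inv_pos.mpr (by linarith)) : (0:ℂ) ≤ (((1-lam)⁻¹ : ℝ) : ℂ))
          (hω₂pos v)
    have hseg : ω ∈ openSegment ℝ φ₁ φ₂ := by
      refine ⟨lam, 1 - lam, h0, by linarith, by ring, ?_⟩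
      apply DFunLike.ext
      intro v
      have lhs : (lam • φ₁ + (1 - lam) • φ₂) v = lam • (φ₁ v) + (1-lam) • (φ₂ v) := rfl
      rw [lhs, hφ₁def, hφ₂def, hsmul_apply, hsmul_apply,
        Complex.real_smul, Complex.real_smul]
      rw [← mul_assoc, ← mul_assoc, ← Complex.ofReal_mul,
        ← Complex.ofReal_mul, mul_inv_cancel₀ (ne_of_gt h0),
        mul_inv_cancel₀ (by linarith : (1:ℝ) - lam ≠ 0)]
      simp only [Complex.ofReal_one, one_mul]
      rw [hω₁def, hω₂def, mulFunctional_apply, mulFunctional_apply, ← map_add]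
      congr 1
      rw [sub_mul, one_mul]
      abel
    have hφ₁eq : φ₁ = ω := (hωext hφ₁S hφ₂S hseg)
    have := congrFun (congrArg DFunLike.coe hφ₁eq) x
    rw [hφ₁def, hsmul_apply, hω₁def, mulFunctional_apply] at this
    -- this : (lam⁻¹ : ℂ) * ω (z * x) = ω x
    have hlamne : ((lam:ℝ):ℂ) ≠ 0 := by exact_mod_cast ne_of_gt h0
    rw [hzre]
    field_simp at this ⊢
    rw [← this]; push_cast; field_simp
end ExtremeCore
section ExtremeMul
variable {A B T : Type*} [CStarAlgebra A] [CStarAlgebra B] [CStarAlgebra T]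
  [PartialOrder A] [StarOrderedRing A] [PartialOrder T] [StarOrderedRing T]

open ComplexStarModule in
lemma extreme_mul (τ : MinCStarTensor A B T) (hcomm : ∀ a b : A, a * b = b * a)
    {ω : WeakDual ℂ T}
    (hext : ω ∈ Set.extremePoints ℝ {φ : WeakDual ℂ T | IsState φ})
    (a : A) (x : T) :
    ω (τ.ι (a ⊗ₜ[ℂ] 1) * x) = ω (τ.ι (a ⊗ₜ[ℂ] 1)) * ω x := by
  set P : A → Prop := fun a => ∀ x : T, ω (τ.ι (a ⊗ₜ[ℂ] 1) * x) = ω (τ.ι (a ⊗ₜ[ℂ] 1)) * ω x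
    with hP
  have hsmul : ∀ (c : ℂ) (a : A), P a → P (c • a) := by
    intro c a hpa x
    have h : (c • a) ⊗ₜ[ℂ] (1:B) = c • (a ⊗ₜ[ℂ] (1:B)) := by
      rw [TensorProduct.smul_tmul']
    rw [h, map_smul, smul_mul_assoc, map_smul, map_smul, smul_eq_mul, smul_eq_mul,
      hpa x, mul_assoc]
  have hadd : ∀ a₁ a₂ : A, P a₁ → P a₂ → P (a₁ + a₂) := by
    intro a₁ a₂ h₁ h₂ x
    have h : (a₁ + a₂) ⊗ₜ[ℂ] (1:B) = a₁ ⊗ₜ[ℂ] (1:B) + a₂ ⊗ₜ[ℂ] (1:B) :=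
      TensorProduct.add_tmul a₁ a₂ 1
    rw [h, map_add, add_mul, map_add, map_add, h₁ x, h₂ x, add_mul]
  have hnonneg : ∀ a : A, 0 ≤ a → P a := by
    intro a ha x
    rcases eq_or_ne a 0 with rfl | hne
    · simp [TensorProduct.zero_tmul]
    · have hn : (0:ℝ) < ‖a‖ := norm_pos_iff.mpr hne
      set b := ‖a‖⁻¹ • a with hb
      have hbnn : 0 ≤ b := real_smul_nonneg (le_of_lt (inv_pos.mpr hn)) ha
      have hbn : ‖b‖ ≤ 1 := by
        rw [hb, norm_smul, norm_inv, Real.norm_eq_abs, abs_of_pos hn,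
          inv_mul_cancel₀ (ne_of_gt hn)]
      have hble : b ≤ 1 := nonneg_le_one_of_norm_le_one hbnn hbn
      have hPb : P b := fun y => extreme_mul_nonneg τ hcomm hext hbnn hble y
      have hab : a = ((‖a‖ : ℝ) : ℂ) • b := by
        rw [hb, ← algebraMap_smul ℂ (‖a‖⁻¹) a]
        rw [smul_smul]
        have : ((‖a‖:ℝ):ℂ) * algebraMap ℝ ℂ ‖a‖⁻¹ = 1 := by
          norm_num
          exact mul_inv_cancel₀ (by exact_mod_cast ne_of_gt hn)
        rw [this, one_smul]
      rw [hab]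
      exact hsmul _ _ hPb x
  have hsa : ∀ a : A, IsSelfAdjoint a → P a := by
    intro a hsa' x
    set p := (2:ℝ)⁻¹ • (algebraMap ℝ A ‖a‖ + a) with hp
    set q := (2:ℝ)⁻¹ • (algebraMap ℝ A ‖a‖ - a) with hq
    have hpnn : 0 ≤ p := by
      apply real_smul_nonneg (by norm_num)
      have h := hsa'.neg_algebraMap_norm_le_self
      calc (0:A) ≤ a - (-(algebraMap ℝ A ‖a‖)) := sub_nonneg.mpr h
        _ = algebraMap ℝ A ‖a‖ + a := by abel
    have hqnn : 0 ≤ q := by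
      apply real_smul_nonneg (by norm_num)
      exact sub_nonneg.mpr hsa'.le_algebraMap_norm_self
    have hdecomp : a = p + ((-1 : ℂ)) • q := by
      rw [neg_one_smul ℂ q, ← sub_eq_add_neg, hp, hq, ← smul_sub]
      have h1 : (algebraMap ℝ A ‖a‖ + a) - (algebraMap ℝ A ‖a‖ - a) = a + a := by abel
      rw [h1, ← two_smul ℝ a, smul_smul]
      norm_num
    rw [hdecomp]
    exact hadd _ _ (hnonneg p hpnn) (hsmul _ _ (hnonneg q hqnn)) x
  have hdecomp : a = ((ℜ a : A)) + (Complex.I) • ((ℑ a : A)) :=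
    (realPart_add_I_smul_imaginaryPart a).symm
  rw [hdecomp]
  exact hadd _ _ (hsa _ (ℜ a).2) (hsmul _ _ (hsa _ (ℑ a).2)) x
end ExtremeMul
section ProdState
variable {A B T : Type*} [CStarAlgebra A] [CStarAlgebra B] [CStarAlgebra T]

variable [PartialOrder A] [StarOrderedRing A] [PartialOrder B] [StarOrderedRing B]
  [PartialOrder T] [StarOrderedRing T]

lemma extreme_prod (τ : MinCStarTensor A B T) (hcomm : ∀ a b : A, a * b = b * a)
    {ω : WeakDual ℂ T}
    (hext : ω ∈ Set.extremePoints ℝ {φ : WeakDual ℂ T | IsState φ}) :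
    ω ∈ prodStates τ := by
  have hstate : IsState ω := hext.1
  -- the linear functionals on A and B
  set φL : A →ₗ[ℂ] ℂ := (WeakDual.toLin ω) ∘ₗ (τ.ι ∘ₗ ((TensorProduct.mk ℂ A B).flip 1))
    with hφLdef
  set ψL : B →ₗ[ℂ] ℂ := (WeakDual.toLin ω) ∘ₗ (τ.ι ∘ₗ (TensorProduct.mk ℂ A B 1))
    with hψLdef
  have hφL_apply : ∀ a : A, φL a = ω (τ.ι (a ⊗ₜ[ℂ] 1)) := fun a => rfl
  have hψL_apply : ∀ b : B, ψL b = ω (τ.ι ((1:A) ⊗ₜ[ℂ] b)) := fun b => rfl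
  have hφL_pos : ∀ a : A, 0 ≤ φL (star a * a) := by
    intro a
    rw [hφL_apply]
    have h1 : (star a * a) ⊗ₜ[ℂ] (1:B) = (star a * a) ⊗ₜ[ℂ] ((1:B) * 1) := by rw [one_mul]
    rw [h1, ← τ.map_mul']
    have h2 : τ.ι (star a ⊗ₜ[ℂ] (1:B)) = star (τ.ι (a ⊗ₜ[ℂ] (1:B))) := by
      rw [τ.map_star', star_one]
    rw [h2]
    exact hstate.2 _
  have hψL_pos : ∀ b : B, 0 ≤ ψL (star b * b) := by
    intro b
    rw [hψL_apply]
    have h1 : (1:A) ⊗ₜ[ℂ] (star b * b) = ((1:A) * 1) ⊗ₜ[ℂ] (star b * b) := by rw [one_mul]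
    rw [h1, ← τ.map_mul']
    have h2 : τ.ι (star (1:A) ⊗ₜ[ℂ] star b) = star (τ.ι ((1:A) ⊗ₜ[ℂ] b)) := by
      rw [τ.map_star']
    rw [show ((1:A) ⊗ₜ[ℂ] star b) = (star (1:A) ⊗ₜ[ℂ] star b) by rw [star_one], h2]
    exact hstate.2 _
  have hφL_one : φL 1 = 1 := by rw [hφL_apply, τ.map_one', hstate.1]
  have hψL_one : ψL 1 = 1 := by rw [hψL_apply, τ.map_one', hstate.1]
  -- continuity
  have hφbound : ∀ a : A, ‖φL a‖ ≤ 2 * ‖a‖ := by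
    intro a
    have := posLin_bound φL hφL_pos a
    rw [hφL_one] at this
    simpa using this
  have hψbound : ∀ b : B, ‖ψL b‖ ≤ 2 * ‖b‖ := by
    intro b
    have := posLin_bound ψL hψL_pos b
    rw [hψL_one] at this
    simpa using this
  set φ : WeakDual ℂ A := (LinearMap.mkContinuous φL 2 hφbound : A →L[ℂ] ℂ) with hφdef
  set ψ : WeakDual ℂ B := (LinearMap.mkContinuous ψL 2 hψbound : B →L[ℂ] ℂ) with hψdef
  have hφ_apply : ∀ a : A, φ a = φL a := fun a => rfl
  have hψ_apply : ∀ b : B, ψ b = ψL b := fun b => rfl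
  refine ⟨φ, ψ, ⟨by rw [hφ_apply, hφL_one], fun a => by rw [hφ_apply]; exact hφL_pos a⟩,
    ⟨by rw [hψ_apply, hψL_one], fun b => by rw [hψ_apply]; exact hψL_pos b⟩, ?_⟩
  intro a b
  have h1 : τ.ι (a ⊗ₜ[ℂ] b) = τ.ι (a ⊗ₜ[ℂ] (1:B)) * τ.ι ((1:A) ⊗ₜ[ℂ] b) := by
    rw [τ.map_mul', mul_one, one_mul]
  rw [h1, extreme_mul τ hcomm hext a (τ.ι ((1:A) ⊗ₜ[ℂ] b))]
  rw [hφ_apply, hψ_apply, hφL_apply, hψL_apply]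
end ProdState

/-- If `A` is commutative, then every state on the minimal C*-tensor product `A ⊗ B`
is separable. -/
theorem state_sep_of_comm {A B T : Type*} [CStarAlgebra A] [CStarAlgebra B]
    [CStarAlgebra T] (hcomm : ∀ a b : A, a * b = b * a)
    (τ : MinCStarTensor A B T) (ω : WeakDual ℂ T) (hω : IsState ω) :
    IsSepState τ ω := by
  letI : PartialOrder A := CStarAlgebra.spectralOrder A
  letI : StarOrderedRing A := CStarAlgebra.spectralOrderedRing A
  letI : PartialOrder B := CStarAlgebra.spectralOrder B
  letI : StarOrderedRing B := CStarAlgebra.spectralOrderedRing B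
  letI : PartialOrder T := CStarAlgebra.spectralOrder T
  letI : StarOrderedRing T := CStarAlgebra.spectralOrderedRing T
  haveI : LocallyConvexSpace ℝ (WeakDual ℂ T) := WeakBilin.locallyConvexSpace
  have hKM : closure (convexHull ℝ (Set.extremePoints ℝ {φ : WeakDual ℂ T | IsState φ}))
      = {φ : WeakDual ℂ T | IsState φ} :=
    closure_convexHull_extremePoints isCompact_states convex_states
  have hsub : Set.extremePoints ℝ {φ : WeakDual ℂ T | IsState φ} ⊆ prodStates τ :=
    fun ψ hψ => extreme_prod τ hcomm hψ
  have hmem : ω ∈ {φ : WeakDual ℂ T | IsState φ} := hω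
  rw [← hKM] at hmem
  exact closure_mono (convexHull_mono hsub) hmem
end

section
/- Let E be a locally convex Hausdorff topological vector space, K ⊆ E a compact subset, and x ∈ E. Then x lies in the closed convex hull of K if and only if there exists a regular Borel probability measure μ on K whose barycenter is x, i.e., f(x) = ∫_K f dμ for every continuous linear functional f on E. -/
set_option linter.unusedSectionVars false
set_option linter.unusedVariables false

open MeasureTheory TopologicalSpace Set
open scoped NNReal ENNReal

namespace BaryRMK

variable {X : Type*} [TopologicalSpace X] [CompactSpace X] [T2Space X]

/-- admissible functions for a set `C`: nonnegative, `≥ 1` on `C`. -/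
def Adm (C : Set X) : Set C(X, ℝ) := {g | (∀ z, 0 ≤ g z) ∧ ∀ z ∈ C, 1 ≤ g z}

lemma one_mem_Adm (C : Set X) : (1 : C(X, ℝ)) ∈ Adm C :=
  ⟨fun _ => zero_le_one, fun _ _ => le_rfl⟩

lemma Adm_mono {C D : Set X} (h : C ⊆ D) : Adm D ⊆ Adm C :=
  fun g hg => ⟨hg.1, fun z hz => hg.2 z (h hz)⟩

variable (Λ : C(X, ℝ) →ₗ[ℝ] ℝ)

/-- the Riesz content associated to `Λ`. -/
noncomputable def rcAux (C : Set X) : ℝ := sInf (Λ '' Adm C)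

variable (hpos : ∀ g : C(X, ℝ), (∀ z, 0 ≤ g z) → 0 ≤ Λ g)

include hpos

lemma Λmono {g h : C(X, ℝ)} (hgh : ∀ z, g z ≤ h z) : Λ g ≤ Λ h := by
  have := hpos (h - g) (fun z => by simpa using sub_nonneg.2 (hgh z))
  rw [map_sub] at this; linarith

lemma bddBelow_Adm (C : Set X) : BddBelow (Λ '' Adm C) :=
  ⟨0, fun r ⟨g, hg, hr⟩ => hr ▸ hpos g hg.1⟩

lemma rcAux_nonneg (C : Set X) : 0 ≤ rcAux Λ C :=
  le_csInf ⟨Λ 1, 1, one_mem_Adm C, rfl⟩ (fun r ⟨g, hg, hr⟩ => hr ▸ hpos g hg.1)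

lemma rcAux_le {C : Set X} {g : C(X, ℝ)} (hg : g ∈ Adm C) : rcAux Λ C ≤ Λ g :=
  csInf_le (bddBelow_Adm Λ hpos C) ⟨g, hg, rfl⟩

lemma le_rcAux {C : Set X} {r : ℝ} (h : ∀ g ∈ Adm C, r ≤ Λ g) : r ≤ rcAux Λ C :=
  le_csInf ⟨Λ 1, 1, one_mem_Adm C, rfl⟩ (fun _ ⟨g, hg, hr⟩ => hr ▸ h g hg)

lemma rcAux_mono {C D : Set X} (h : C ⊆ D) : rcAux Λ C ≤ rcAux Λ D :=
  le_rcAux Λ hpos fun g hg => rcAux_le Λ hpos (Adm_mono h hg)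

lemma rcAux_union_le (C D : Set X) :
    rcAux Λ (C ∪ D) ≤ rcAux Λ C + rcAux Λ D := by
  refine le_of_forall_pos_le_add fun ε hε => ?_
  obtain ⟨r, ⟨g, hg, rfl⟩, hr⟩ := exists_lt_of_csInf_lt
    (Set.Nonempty.image _ ⟨1, one_mem_Adm C⟩) (lt_add_of_pos_right (rcAux Λ C) (half_pos hε))
  obtain ⟨s, ⟨h, hh, rfl⟩, hs⟩ := exists_lt_of_csInf_lt
    (Set.Nonempty.image _ ⟨1, one_mem_Adm D⟩) (lt_add_of_pos_right (rcAux Λ D) (half_pos hε))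
  have : g + h ∈ Adm (C ∪ D) := by
    refine ⟨fun z => by have := hg.1 z; have := hh.1 z; simp; linarith, fun z hz => ?_⟩
    rcases hz with hz | hz
    · have := hg.2 z hz; have := hh.1 z; simp; linarith
    · have := hh.2 z hz; have := hg.1 z; simp; linarith
  have := rcAux_le Λ hpos this
  rw [map_add] at this
  linarith

lemma rcAux_union_eq {C D : Set X} (hC : IsClosed C) (hD : IsClosed D)
    (hdis : Disjoint C D) : rcAux Λ (C ∪ D) = rcAux Λ C + rcAux Λ D := by
  refine le_antisymm (rcAux_union_le Λ hpos C D) (le_rcAux Λ hpos fun g hg => ?_)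
  obtain ⟨φ, hφD, hφC, hφ01⟩ := exists_continuous_zero_one_of_isClosed hD hC hdis.symm
  have h1 : g * φ ∈ Adm C := by
    refine ⟨fun z => mul_nonneg (hg.1 z) (hφ01 z).1, fun z hz => ?_⟩
    have := hg.2 z (Or.inl hz)
    have : φ z = 1 := hφC hz
    simp only [ContinuousMap.mul_apply, this, mul_one]
    exact hg.2 z (Or.inl hz)
  have h2 : g * (1 - φ) ∈ Adm D := by
    refine ⟨fun z => mul_nonneg (hg.1 z) (by have := (hφ01 z).2; simp; linarith), fun z hz => ?_⟩
    have hz0 : φ z = 0 := hφD hz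
    simp only [ContinuousMap.mul_apply, ContinuousMap.sub_apply, ContinuousMap.one_apply, hz0,
      sub_zero, mul_one]
    exact hg.2 z (Or.inr hz)
  have key : Λ (g * φ) + Λ (g * (1 - φ)) = Λ g := by
    rw [← map_add]; congr 1; ring
  have := add_le_add (rcAux_le Λ hpos h1) (rcAux_le Λ hpos h2)
  rw [key] at this
  exact this

/-- The Riesz content as a `Content`. -/
noncomputable def rContent : Content X where
  toFun C := ⟨rcAux Λ C, rcAux_nonneg Λ hpos C⟩
  mono' C D h := by refine NNReal.coe_le_coe.1 ?_; exact rcAux_mono Λ hpos h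
  sup_disjoint' C D hdis hC hD := by
    ext
    push_cast
    exact rcAux_union_eq Λ hpos hC hD hdis
  sup_le' C D := by
    refine NNReal.coe_le_coe.1 ?_
    push_cast
    exact rcAux_union_le Λ hpos C D

section Measure

variable [MeasurableSpace X] [BorelSpace X]

/-- The measure associated to a positive linear functional. -/
noncomputable def rmkMeasure : Measure X := (rContent Λ hpos).measure

lemma rmkMeasure_regular : (rmkMeasure Λ hpos).Regular := Content.regular _

lemma rContent_toFun (C : Compacts X) :
    ((rContent Λ hpos).toFun C : ℝ≥0∞) = ENNReal.ofReal (rcAux Λ (C : Set X)) := by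
  rw [ENNReal.ofReal_eq_coe_nnreal (rcAux_nonneg Λ hpos _)]
  rfl

variable (hone : Λ 1 = 1)

include hone in
lemma rcAux_univ : rcAux Λ (univ : Set X) = 1 := by
  refine le_antisymm (by simpa [hone] using rcAux_le Λ hpos (one_mem_Adm univ)) ?_
  refine le_rcAux Λ hpos fun g hg => ?_
  calc (1:ℝ) = Λ 1 := hone.symm
  _ ≤ Λ g := Λmono Λ hpos fun z => by simpa using hg.2 z (mem_univ z)

include hone in
lemma rmkMeasure_univ : rmkMeasure Λ hpos (univ : Set X) = 1 := by
  rw [rmkMeasure, Content.measure_apply _ MeasurableSet.univ,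
    Content.outerMeasure_of_isOpen _ _ isOpen_univ,
    Content.innerContent_of_isCompact _ isCompact_univ isOpen_univ]
  show ((rContent Λ hpos).toFun ⟨univ, isCompact_univ⟩ : ℝ≥0∞) = 1
  rw [rContent_toFun]
  show ENNReal.ofReal (rcAux Λ (univ : Set X)) = 1
  rw [rcAux_univ Λ hpos hone]
  simp

include hone in
lemma rmkMeasure_prob : IsProbabilityMeasure (rmkMeasure Λ hpos) :=
  ⟨rmkMeasure_univ Λ hpos hone⟩

lemma lam_le_measure_of_subord (h : C(X, ℝ)) (hh0 : ∀ z, 0 ≤ h z) (hh1 : ∀ z, h z ≤ 1)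
    {U : Set X} (hU : IsOpen U) (hsupp : tsupport h ⊆ U) :
    ENNReal.ofReal (Λ h) ≤ rmkMeasure Λ hpos U := by
  have hC : IsCompact (tsupport h) := (isClosed_tsupport h).isCompact
  have key : Λ h ≤ rcAux Λ (tsupport h) := by
    refine le_rcAux Λ hpos fun g hg => Λmono Λ hpos fun z => ?_
    by_cases hz : z ∈ tsupport h
    · exact (hh1 z).trans (hg.2 z hz)
    · rw [image_eq_zero_of_notMem_tsupport hz]; exact hg.1 z
  have step : ((rContent Λ hpos).toFun ⟨tsupport h, hC⟩ : ℝ≥0∞)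
      ≤ (rContent Λ hpos).innerContent ⟨U, hU⟩ :=
    Content.le_innerContent _ ⟨tsupport h, hC⟩ ⟨U, hU⟩ hsupp
  rw [rmkMeasure, Content.measure_apply _ hU.measurableSet,
    Content.outerMeasure_of_isOpen _ _ hU]
  refine le_trans ?_ step
  rw [rContent_toFun]
  exact ENNReal.ofReal_le_ofReal key

set_option maxHeartbeats 1000000 in
include hone in
lemma lam_le_integral_aux (g : C(X, ℝ)) (hg : ∀ z, 0 ≤ g z) {ε : ℝ} (hε : 0 < ε)
    (hε1 : ε ≤ 1) :
    Λ g ≤ (∫ z, g z ∂(rmkMeasure Λ hpos)) + (‖g‖ + 4) * ε := by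
  set μ := rmkMeasure Λ hpos with hμ
  haveI hprob : IsProbabilityMeasure μ := rmkMeasure_prob Λ hpos hone
  haveI hreg : μ.OuterRegular := (rmkMeasure_regular Λ hpos).toOuterRegular
  have hgint : Integrable (fun z => g z) μ := by
    have := (g.continuous.continuousOn).integrableOn_compact (μ := μ) isCompact_univ
    rwa [integrableOn_univ] at this
  set b : ℝ := ‖g‖ with hb
  have hb0 : 0 ≤ b := norm_nonneg g
  set n : ℕ := ⌈b / ε⌉₊ + 1 with hn
  have hn0 : 0 < n := Nat.succ_pos _
  have hnpos : (0:ℝ) < n := by exact_mod_cast hn0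
  have hnb2 : (n:ℝ) * ε ≤ b + 2 * ε := by
    have h1 : (⌈b / ε⌉₊ : ℝ) < b / ε + 1 := Nat.ceil_lt_add_one (by positivity)
    have h2 : (n:ℝ) < b / ε + 2 := by rw [hn]; push_cast; linarith
    have h3 : (b / ε + 2) * ε = b + 2 * ε := by field_simp
    nlinarith
  -- the Borel pieces
  set E : Fin n → Set X := fun i => (fun z => g z) ⁻¹' (Set.Ioc ((i:ℝ) * ε - ε) ((i:ℝ) * ε))
    with hEdef
  have hEmem : ∀ (i : Fin n) z, z ∈ E i ↔ ((i:ℝ) * ε - ε < g z ∧ g z ≤ (i:ℝ) * ε) := by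
    intro i z; rw [hEdef]; simp [Set.mem_Ioc]
  have hEmeas : ∀ i, MeasurableSet (E i) :=
    fun _ => g.continuous.measurable measurableSet_Ioc
  have hEcover : (⋃ i, E i) = univ := by
    refine eq_univ_of_forall fun z => ?_
    have h0 : 0 ≤ g z := hg z
    have hzb : g z ≤ b := (le_abs_self _).trans (by simpa using g.norm_coe_le_norm z)
    have hidx : ⌈g z / ε⌉₊ < n := by
      have : ⌈g z / ε⌉₊ ≤ ⌈b / ε⌉₊ := Nat.ceil_le_ceil (by gcongr)
      omega
    refine mem_iUnion.2 ⟨⟨⌈g z / ε⌉₊, hidx⟩, (hEmem _ z).2 ⟨?_, ?_⟩⟩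
    · have h1 : (⌈g z / ε⌉₊ : ℝ) < g z / ε + 1 := Nat.ceil_lt_add_one (by positivity)
      have h2 : (g z / ε) * ε = g z := by field_simp
      nlinarith
    · have h1 : g z / ε ≤ (⌈g z / ε⌉₊ : ℝ) := Nat.le_ceil _
      have h2 : (g z / ε) * ε = g z := by field_simp
      nlinarith
  have hEdis : Pairwise (Function.onFun Disjoint E) := by
    have key : ∀ i j : Fin n, i < j → ∀ z, z ∈ E i → z ∈ E j → False := by
      intro i j hij z hzi hzj
      obtain ⟨hi1, hi2⟩ := (hEmem i z).1 hzi
      obtain ⟨hj1, hj2⟩ := (hEmem j z).1 hzj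
      have : (i:ℝ) + 1 ≤ (j:ℝ) := by exact_mod_cast Nat.succ_le_of_lt hij
      nlinarith
    intro i j hij
    rw [Function.onFun, Set.disjoint_left]
    intro z hzi hzj
    rcases hij.lt_or_gt with h | h
    · exact key i j h z hzi hzj
    · exact key j i h z hzj hzi
  have hEμ : ∀ i, μ (E i) ≠ ⊤ := fun i => measure_ne_top μ _
  have hm0 : ∀ i, 0 ≤ (μ (E i)).toReal := fun i => ENNReal.toReal_nonneg
  have hsum1 : ∑ i, (μ (E i)).toReal = 1 := by
    rw [← ENNReal.toReal_sum (fun i _ => hEμ i), ← tsum_fintype (L := .unconditional _),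
      ← measure_iUnion hEdis hEmeas, hEcover, measure_univ, ENNReal.toReal_one]
  -- open approximations
  have hUex : ∀ i : Fin n, ∃ U : Set X, E i ⊆ U ∧ IsOpen U ∧
      μ U ≤ μ (E i) + ENNReal.ofReal (ε / n) ∧
      ∀ z ∈ U, g z < (i:ℝ) * ε + ε := by
    intro i
    have hlt : μ (E i) < μ (E i) + ENNReal.ofReal (ε / n) :=
      ENNReal.lt_add_right (hEμ i) (by simp [ENNReal.ofReal_eq_zero]; positivity)
    obtain ⟨V, hEV, hVopen, hVlt⟩ := (E i).exists_isOpen_lt_of_lt _ hlt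
    refine ⟨V ∩ (fun z => g z) ⁻¹' (Set.Iio ((i:ℝ) * ε + ε)), fun z hz => ⟨hEV hz, ?_⟩,
      hVopen.inter (isOpen_Iio.preimage g.continuous), ?_, fun z hz => hz.2⟩
    · have := ((hEmem i z).1 hz).2
      simp only [Set.mem_preimage, Set.mem_Iio]
      linarith
    · exact le_trans (measure_mono inter_subset_left) hVlt.le
  choose U hEU hUopen hUμ hUlt using hUex
  -- partition of unity
  have hcover2 : (univ : Set X) ⊆ ⋃ i, U i :=
    hEcover ▸ iUnion_mono hEU
  obtain ⟨f, hf⟩ := PartitionOfUnity.exists_isSubordinate isClosed_univ U hUopen hcover2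
  have hsumf : ∀ z, ∑ i, f i z = 1 := fun z => by
    have := f.sum_eq_one (mem_univ z); rwa [finsum_eq_sum_of_fintype] at this
  have hdecomp : Λ g = ∑ i, Λ (f i * g) := by
    rw [← map_sum]
    congr 1
    ext z
    rw [ContinuousMap.sum_apply]
    simp only [ContinuousMap.mul_apply]
    rw [← Finset.sum_mul, hsumf z, one_mul]
  have hΛh_nonneg : ∀ i, 0 ≤ Λ (f i) := fun i => hpos _ (f.nonneg i)
  have hΛh_le : ∀ i, Λ (f i) ≤ (μ (E i)).toReal + ε / n := by
    intro i
    have h1 : ENNReal.ofReal (Λ (f i)) ≤ μ (U i) :=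
      lam_le_measure_of_subord Λ hpos (f i) (f.nonneg i) (f.le_one i) (hUopen i) (hf i)
    have h2 := le_trans h1 (hUμ i)
    have hfin : μ (E i) + ENNReal.ofReal (ε / n) ≠ ⊤ :=
      ENNReal.add_ne_top.2 ⟨hEμ i, ENNReal.ofReal_ne_top⟩
    calc Λ (f i) = (ENNReal.ofReal (Λ (f i))).toReal :=
          (ENNReal.toReal_ofReal (hΛh_nonneg i)).symm
    _ ≤ (μ (E i) + ENNReal.ofReal (ε / n)).toReal := ENNReal.toReal_mono hfin h2
    _ = (μ (E i)).toReal + ε / n := by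
        rw [ENNReal.toReal_add (hEμ i) ENNReal.ofReal_ne_top,
          ENNReal.toReal_ofReal (by positivity)]
  have hpiece : ∀ i, Λ (f i * g) ≤ ((i:ℝ) * ε + ε) * Λ (f i) := by
    intro i
    have hmono := Λmono Λ hpos (g := f i * g) (h := ((i:ℝ) * ε + ε) • f i) ?_
    · rwa [_root_.map_smul, smul_eq_mul] at hmono
    · intro z
      simp only [ContinuousMap.mul_apply, ContinuousMap.smul_apply, smul_eq_mul]
      by_cases hz : z ∈ tsupport (f i)
      · have hzU : z ∈ U i := hf i hz
        have h1 : g z < (i:ℝ) * ε + ε := hUlt i z hzU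
        have h2 := f.nonneg i z
        nlinarith
      · rw [image_eq_zero_of_notMem_tsupport hz]
        simp
  have hint : ∀ i : Fin n, ((i:ℝ) * ε - ε) * (μ (E i)).toReal ≤ ∫ z in E i, g z ∂μ :=
    fun i => setIntegral_ge_of_const_le_real (hEmeas i) (hEμ i)
      (fun z hz => le_of_lt ((hEmem i z).1 hz).1) hgint.integrableOn
  have hintsum : ∑ i, ∫ z in E i, g z ∂μ = ∫ z, g z ∂μ := by
    rw [← integral_iUnion_fintype hEmeas hEdis (fun i => hgint.integrableOn), hEcover,
      setIntegral_univ]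
  -- combine
  have main : ∀ i : Fin n, Λ (f i * g) ≤
      (∫ z in E i, g z ∂μ) + 2 * ε * (μ (E i)).toReal + (n:ℝ) * ε * (ε / n) := by
    intro i
    have h1 := hpiece i
    have h2 := hΛh_le i
    have h3 := hΛh_nonneg i
    have h4 := hint i
    have h5 := hm0 i
    have hi : (i:ℝ) + 1 ≤ (n:ℝ) := by exact_mod_cast Nat.succ_le_of_lt i.2
    have hεn : 0 ≤ ε / n := by positivity
    have hc0 : (0:ℝ) ≤ (i:ℝ) * ε + ε := by positivity
    have hA : Λ (f i * g) ≤ ((i:ℝ) * ε + ε) * ((μ (E i)).toReal + ε / n) :=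
      h1.trans (mul_le_mul_of_nonneg_left h2 hc0)
    have hB : (i:ℝ) * ε + ε ≤ (n:ℝ) * ε := by
      linarith [mul_le_mul_of_nonneg_right hi hε.le]
    have hC : ((i:ℝ) * ε + ε) * ((μ (E i)).toReal + ε / n) =
        ((i:ℝ) * ε - ε) * (μ (E i)).toReal + 2 * ε * (μ (E i)).toReal
          + ((i:ℝ) * ε + ε) * (ε / n) := by ring
    have hD := mul_le_mul_of_nonneg_right hB hεn
    linarith [hA, h4, hD]
  calc Λ g = ∑ i, Λ (f i * g) := hdecomp
  _ ≤ ∑ i : Fin n, ((∫ z in E i, g z ∂μ) + 2 * ε * (μ (E i)).toReal + (n:ℝ) * ε * (ε / n)) :=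
      Finset.sum_le_sum fun i _ => main i
  _ = (∫ z, g z ∂μ) + 2 * ε + (n:ℝ) * ε * ε := by
      rw [Finset.sum_add_distrib, Finset.sum_add_distrib, hintsum, ← Finset.mul_sum, hsum1,
        Finset.sum_const, Finset.card_univ, Fintype.card_fin, nsmul_eq_mul]
      have : (n:ℝ) * ((n:ℝ) * ε * (ε / n)) = (n:ℝ) * ε * ε := by field_simp
      linarith [this]
  _ ≤ (∫ z, g z ∂μ) + (b + 4) * ε := by
      nlinarith [mul_le_mul_of_nonneg_right hnb2 hε.le]

include hone in
lemma lam_le_integral_nonneg (g : C(X, ℝ)) (hg : ∀ z, 0 ≤ g z) :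
    Λ g ≤ ∫ z, g z ∂(rmkMeasure Λ hpos) := by
  refine le_of_forall_pos_le_add fun η hη => ?_
  have hd : (0:ℝ) < ‖g‖ + 4 := by positivity
  set ε : ℝ := min 1 (η / (‖g‖ + 4)) with hε
  have hε0 : 0 < ε := lt_min one_pos (by positivity)
  have hε1 : ε ≤ 1 := min_le_left _ _
  have := lam_le_integral_aux Λ hpos hone g hg hε0 hε1
  have hle : (‖g‖ + 4) * ε ≤ η := by
    have h1 : ε ≤ η / (‖g‖ + 4) := min_le_right _ _
    calc (‖g‖ + 4) * ε ≤ (‖g‖ + 4) * (η / (‖g‖ + 4)) := by gcongr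
    _ = η := by field_simp
  linarith

include hone in
lemma lam_eq_integral (g : C(X, ℝ)) :
    Λ g = ∫ z, g z ∂(rmkMeasure Λ hpos) := by
  set μ := rmkMeasure Λ hpos with hμ
  haveI hprob : IsProbabilityMeasure μ := rmkMeasure_prob Λ hpos hone
  have hint : ∀ h : C(X, ℝ), Integrable (fun z => h z) μ := by
    intro h
    have := (h.continuous.continuousOn).integrableOn_compact (μ := μ) isCompact_univ
    rwa [integrableOn_univ] at this
  have key : ∀ h : C(X, ℝ), Λ h ≤ ∫ z, h z ∂μ := by
    intro h
    set c : ℝ := ‖h‖ with hc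
    have hnn : ∀ z, 0 ≤ (h + c • (1 : C(X, ℝ))) z := by
      intro z
      have h1 : |h z| ≤ c := by simpa using h.norm_coe_le_norm z
      have := abs_le.1 h1
      simp only [ContinuousMap.add_apply, ContinuousMap.smul_apply, ContinuousMap.one_apply,
        smul_eq_mul, mul_one]
      linarith
    have h2 := lam_le_integral_nonneg Λ hpos hone _ hnn
    rw [map_add, _root_.map_smul, hone, smul_eq_mul, mul_one] at h2
    have h3 : ∫ z, (h + c • (1 : C(X, ℝ))) z ∂μ = (∫ z, h z ∂μ) + c := by
      have : (fun z => (h + c • (1 : C(X, ℝ))) z) = fun z => h z + c := by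
        ext z
        simp [ContinuousMap.add_apply, ContinuousMap.smul_apply]
      rw [this, integral_add (hint h) (integrable_const c), integral_const]
      simp [measure_univ]
    rw [h3] at h2
    linarith
  refine le_antisymm (key g) ?_
  have := key (-g)
  rw [map_neg] at this
  have hneg : ∫ z, (-g) z ∂μ = -∫ z, g z ∂μ := by
    have : (fun z => (-g) z) = fun z => -(g z) := by ext z; simp
    rw [this, integral_neg]
  rw [hneg] at this
  linarith

end Measure

section Sup

omit hpos

variable {Y : Type*} [TopologicalSpace Y] [CompactSpace Y] [Nonempty Y]

/-- sup functional. -/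
noncomputable def supN (g : C(Y, ℝ)) : ℝ := sSup (Set.range g)

lemma le_supN (g : C(Y, ℝ)) (z : Y) : g z ≤ supN g :=
  le_csSup (isCompact_range g.continuous).bddAbove ⟨z, rfl⟩

lemma supN_le {g : C(Y, ℝ)} {r : ℝ} (h : ∀ z, g z ≤ r) : supN g ≤ r :=
  csSup_le (range_nonempty _) (by rintro _ ⟨z, rfl⟩; exact h z)

lemma supN_add (g h : C(Y, ℝ)) : supN (g + h) ≤ supN g + supN h :=
  supN_le fun z => by
    simpa using add_le_add (le_supN g z) (le_supN h z)

lemma supN_smul {c : ℝ} (hc : 0 < c) (g : C(Y, ℝ)) : supN (c • g) = c * supN g := by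
  refine le_antisymm (supN_le fun z => ?_) ?_
  · simpa using mul_le_mul_of_nonneg_left (le_supN g z) hc.le
  · have h1 : supN g ≤ supN (c • g) / c := supN_le fun z => by
      rw [le_div_iff₀ hc, mul_comm]
      simpa using le_supN (c • g) z
    have := mul_le_mul_of_nonneg_left h1 hc.le
    rwa [mul_div_cancel₀ _ hc.ne'] at this

lemma pos_of_le_supN (Λ : C(Y, ℝ) →ₗ[ℝ] ℝ) (hle : ∀ g, Λ g ≤ supN g)
    (g : C(Y, ℝ)) (hg : ∀ z, 0 ≤ g z) : 0 ≤ Λ g := by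
  have h1 : Λ (-g) ≤ supN (-g) := hle (-g)
  have h2 : supN (-g) ≤ 0 := supN_le fun z => by simpa using hg z
  rw [map_neg] at h1
  linarith

end Sup

section Restr

omit hpos

variable {E : Type*} [AddCommGroup E] [Module ℝ E] [TopologicalSpace E]

/-- restriction of an affine functional to a subset. -/
noncomputable def restrOp (K : Set E) : ((E →L[ℝ] ℝ) × ℝ) →ₗ[ℝ] C(↥K, ℝ) where
  toFun p := ⟨fun z => p.1 z + p.2,
    (p.1.continuous.comp continuous_subtype_val).add continuous_const⟩
  map_add' p q := by ext z; simp; ring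
  map_smul' c p := by ext z; simp; ring

@[simp] lemma restrOp_apply (K : Set E) (p : (E →L[ℝ] ℝ) × ℝ) (z : ↥K) :
    restrOp K p z = p.1 z + p.2 := rfl

/-- evaluation of an affine functional at a point. -/
noncomputable def evalOp (x : E) : ((E →L[ℝ] ℝ) × ℝ) →ₗ[ℝ] ℝ where
  toFun p := p.1 x + p.2
  map_add' p q := by simp; ring
  map_smul' c p := by simp; ring

@[simp] lemma evalOp_apply (x : E) (p : (E →L[ℝ] ℝ) × ℝ) : evalOp x p = p.1 x + p.2 := rfl

end Restr

end BaryRMK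

open BaryRMK in
/-- A point `x` of a locally convex Hausdorff space lies in the closed convex hull of a
compact set `K` iff there is a regular Borel probability measure on `K` whose
barycenter is `x`, i.e. `f x = ∫ f dμ` for every continuous linear functional `f`. -/
theorem mem_closedConvexHull_iff_barycenter {E : Type*} [AddCommGroup E] [Module ℝ E]
    [TopologicalSpace E] [IsTopologicalAddGroup E] [ContinuousSMul ℝ E]
    [LocallyConvexSpace ℝ E] [T2Space E] [MeasurableSpace E] [BorelSpace E]
    (K : Set E) (hK : IsCompact K) (x : E) :
    x ∈ closure (convexHull ℝ K) ↔
      ∃ μ : Measure K, IsProbabilityMeasure μ ∧ μ.Regular ∧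
        ∀ f : E →L[ℝ] ℝ, f x = ∫ y : K, f (y : E) ∂μ := by
  haveI : CompactSpace ↥K := isCompact_iff_compactSpace.1 hK
  constructor
  · intro hx
    have hKne : K.Nonempty := by
      rcases K.eq_empty_or_nonempty with rfl | h
      · simp [convexHull_empty, closure_empty] at hx
      · exact h
    haveI : Nonempty ↥K := hKne.to_subtype
    set S := restrOp (E := E) K with hSdef
    set φ := evalOp (E := E) x with hφdef
    have keybound : ∀ (f : E →L[ℝ] ℝ) (c r : ℝ), (∀ z ∈ K, f z + c ≤ r) → f x + c ≤ r := by
      intro f c r hfr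
      have hset : {y : E | f y + c ≤ r} = {y : E | f y ≤ r - c} := by
        ext y; constructor <;> intro hy <;> simp at * <;> linarith
      have hconv : Convex ℝ {y : E | f y + c ≤ r} := by
        rw [hset]; exact convex_halfSpace_le ⟨f.map_add, f.map_smul⟩ _
      have hclosed : IsClosed {y : E | f y + c ≤ r} :=
        isClosed_le (f.continuous.add continuous_const) continuous_const
      exact closure_minimal (convexHull_min hfr hconv) hclosed hx
    have hdom : ∀ p : (E →L[ℝ] ℝ) × ℝ, φ p ≤ supN (S p) := by
      intro p
      refine keybound p.1 p.2 _ fun z hz => ?_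
      have := le_supN (S p) ⟨z, hz⟩
      simpa [hSdef] using this
    have hker : LinearMap.ker S ≤ LinearMap.ker φ := by
      intro p hp
      rw [LinearMap.mem_ker] at hp ⊢
      have h0 : ∀ z ∈ K, p.1 z + p.2 = 0 := fun z hz => by
        have := congrArg (fun q : C(↥K, ℝ) => q ⟨z, hz⟩) hp
        simpa [hSdef] using this
      have h1 : p.1 x + p.2 ≤ 0 := keybound p.1 p.2 0 fun z hz => (h0 z hz).le
      have h2 : (-p.1) x + (-p.2) ≤ 0 :=
        keybound (-p.1) (-p.2) 0 fun z hz => by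
          simp only [ContinuousLinearMap.neg_apply]
          linarith [h0 z hz]
      have h3 : φ p = p.1 x + p.2 := rfl
      rw [h3]
      simp only [ContinuousLinearMap.neg_apply] at h2
      linarith
    set ψ : LinearMap.range S →ₗ[ℝ] ℝ :=
      ((LinearMap.ker S).liftQ φ hker).comp S.quotKerEquivRange.symm.toLinearMap with hψdef
    have hψ : ∀ p : (E →L[ℝ] ℝ) × ℝ, ψ ⟨S p, LinearMap.mem_range_self S p⟩ = φ p := by
      intro p
      have h1 : S.quotKerEquivRange.symm ⟨S p, LinearMap.mem_range_self S p⟩ =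
          Submodule.Quotient.mk p := by
        rw [LinearEquiv.symm_apply_eq]
        exact Subtype.ext (LinearMap.quotKerEquivRange_apply_mk S p).symm
      show ((LinearMap.ker S).liftQ φ hker) (S.quotKerEquivRange.symm ⟨S p, _⟩) = φ p
      rw [h1, Submodule.liftQ_apply]
    obtain ⟨Λ, hΛext, hΛle⟩ := exists_extension_of_le_sublinear
      (LinearPMap.mk (LinearMap.range S) ψ) supN
      (fun c hc g => supN_smul hc g) supN_add
      (by rintro ⟨m, p, rfl⟩; exact le_of_eq_of_le (hψ p) (hdom p))
    have hpos : ∀ g : C(↥K, ℝ), (∀ z, 0 ≤ g z) → 0 ≤ Λ g :=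
      pos_of_le_supN Λ hΛle
    have hone : Λ 1 = 1 := by
      have h1 : (1 : C(↥K, ℝ)) = S (0, 1) := by ext z; simp [hSdef]
      calc Λ 1 = Λ (S (0, 1)) := by rw [← h1]
      _ = ψ ⟨S (0, 1), LinearMap.mem_range_self S (0, 1)⟩ :=
          hΛext ⟨S (0, 1), LinearMap.mem_range_self S (0, 1)⟩
      _ = φ (0, 1) := hψ _
      _ = 1 := by simp [hφdef]
    have hf : ∀ f : E →L[ℝ] ℝ, Λ (S (f, 0)) = f x := by
      intro f
      calc Λ (S (f, 0)) = ψ ⟨S (f, 0), LinearMap.mem_range_self S (f, 0)⟩ :=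
          hΛext ⟨S (f, 0), LinearMap.mem_range_self S (f, 0)⟩
      _ = φ (f, 0) := hψ _
      _ = f x := by simp [hφdef]
    refine ⟨rmkMeasure Λ hpos, rmkMeasure_prob Λ hpos hone,
      rmkMeasure_regular Λ hpos, fun f => ?_⟩
    have hI := lam_eq_integral Λ hpos hone (S (f, 0))
    rw [hf f] at hI
    rw [hI]
    have : (fun z : ↥K => S (f, 0) z) = fun z : ↥K => f z := by
      ext z; simp [hSdef]
    rw [this]
  · rintro ⟨μ, hμprob, _hμreg, hbary⟩
    haveI := hμprob
    have hKne : Nonempty ↥K := by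
      by_contra hne
      rw [not_nonempty_iff] at hne
      have h1 : μ Set.univ = 1 := measure_univ
      rw [Set.univ_eq_empty_iff.mpr hne, measure_empty] at h1
      exact zero_ne_one h1
    by_contra hx
    obtain ⟨f, u, hfu, hux⟩ := geometric_hahn_banach_closed_point
      (convex_convexHull ℝ K).closure isClosed_closure hx
    have hfy : (fun z : ↥K => f z) ≤ fun _ : ↥K => u := fun z =>
      (hfu _ (subset_closure (subset_convexHull ℝ K z.2))).le
    have hint : Integrable (fun z : ↥K => f z) μ := by
      have := ((f.continuous.comp continuous_subtype_val).continuousOn).integrableOn_compact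
        (μ := μ) isCompact_univ
      rwa [integrableOn_univ] at this
    have h2 : ∫ z : ↥K, f z ∂μ ≤ u := by
      calc ∫ z : ↥K, f z ∂μ ≤ ∫ _ : ↥K, u ∂μ := integral_mono hint (integrable_const u) hfy
      _ = u := by simp [measure_univ]
    rw [← hbary f] at h2
    linarith
end
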